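/- Define B_0(z) := 1 and B_n(z) := ∏_{j=1}^{n} (z - q^{j-1})/(1 - q^j) for n ≥ 1. Then for all nonnegative integers m and n: B_n(z) = y^n Σ_{j=0}^{n} ((y^{-1})_{n-j}/(q)_{n-j}) B_j(y^{-1} z), where (x)_k = ∏_{i=0}^{k-1}(1 - x q^i), in the field of rational functions in q, y, z. -/
import Mathlib


/-- The q-shifted factorial `(x)_k = ∏_{i=0}^{k-1} (1 - x q^i)`. -/
def qpoch {F : Type*} [Field F] (q x : F) (n : ℕ) : F :=
  ∏ i ∈ Finset.range n, (1 - x * q ^ i)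

/-- `B_n(z) = ∏_{j=1}^{n} (z - q^{j-1})/(1 - q^j)`. -/
def Bpoly {F : Type*} [Field F] (q z : F) (n : ℕ) : F :=
  ∏ j ∈ Finset.range n, (z - q ^ j) / (1 - q ^ (j + 1))

theorem stmt_4 {F : Type*} [Field F] (q y z : F) (hq : q ≠ 0) (hy : y ≠ 0)
    (hq1 : ∀ n : ℕ, 1 ≤ n → q ^ n ≠ 1) (n : ℕ) :
    Bpoly q z n =
      y ^ n * ∑ j ∈ Finset.range (n + 1),
        qpoch q y⁻¹ (n - j) / qpoch q q (n - j) * Bpoly q (y⁻¹ * z) j := by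
  have hne : ∀ k : ℕ, (1 : F) - q ^ (k + 1) ≠ 0 := fun k =>
    sub_ne_zero.mpr fun h => hq1 (k + 1) (Nat.le_add_left 1 k) h.symm
  have hne' : ∀ k : ℕ, (1 : F) - q * q ^ k ≠ 0 := by
    intro k; rw [mul_comm, ← pow_succ]; exact hne k
  have hQ : ∀ k : ℕ, qpoch q q k ≠ 0 := by
    intro k
    unfold qpoch
    exact Finset.prod_ne_zero_iff.mpr fun i _ => hne' i
  set w := y⁻¹ * z with hwdef
  have hz : z = y * w := by rw [hwdef, ← mul_assoc, mul_inv_cancel₀ hy, one_mul]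
  set c : ℕ → F := fun k => qpoch q y⁻¹ k / qpoch q q k with hc
  have crel : ∀ k : ℕ, c (k + 1) * ((1 - q ^ (k + 1)) * y) = c k * (y - q ^ k) := by
    intro k
    have e1 : c (k + 1) = c k * ((1 - y⁻¹ * q ^ k) / (1 - q * q ^ k)) := by
      simp only [hc, qpoch, Finset.prod_range_succ]
      rw [div_mul_div_comm]
    rw [e1, pow_succ, mul_comm (q ^ k) q, mul_assoc,
      ← mul_assoc ((1 - y⁻¹ * q ^ k) / (1 - q * q ^ k)) (1 - q * q ^ k) y,
      div_mul_cancel₀ _ (hne' k), sub_mul, one_mul, mul_comm y⁻¹ (q ^ k),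
      mul_assoc, inv_mul_cancel₀ hy, mul_one]
  have Brec : ∀ (x : F) (m : ℕ),
      Bpoly q x (m + 1) * (1 - q ^ (m + 1)) = Bpoly q x m * (x - q ^ m) := by
    intro x m
    unfold Bpoly
    rw [Finset.prod_range_succ, mul_assoc, div_mul_cancel₀ _ (hne m)]
  have Bwrec : ∀ j : ℕ, w * Bpoly q w j
      = (1 - q ^ (j + 1)) * Bpoly q w (j + 1) + q ^ j * Bpoly q w j := by
    intro j
    linear_combination -Brec w j
  suffices H : ∀ m : ℕ, Bpoly q z m
      = y ^ m * ∑ j ∈ Finset.range (m + 1), c (m - j) * Bpoly q w j by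
    simpa [hc] using H n
  intro m
  induction m with
  | zero => simp [Bpoly, hc, qpoch]
  | succ m ih =>
    apply mul_right_cancel₀ (hne m)
    rw [Brec z m, ih]
    have key : (∑ j ∈ Finset.range (m + 1), c (m - j) * Bpoly q w j) * (z - q ^ m)
        = (∑ j ∈ Finset.range (m + 2), c (m + 1 - j) * Bpoly q w j)
          * ((1 - q ^ (m + 1)) * y) := by
      have expand : ∀ j ∈ Finset.range (m + 1),
          c (m - j) * Bpoly q w j * (z - q ^ m)
          = y * c (m - j) * (1 - q ^ (j + 1)) * Bpoly q w (j + 1)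
            + c (m - j) * (y * q ^ j - q ^ m) * Bpoly q w j := by
        intro j _
        rw [hz]
        linear_combination (c (m - j) * y) * Bwrec j
      have termwise : ∀ j ∈ Finset.range (m + 1),
          y * c (m + 1 - j) * (1 - q ^ j) * Bpoly q w j
            + c (m - j) * (y * q ^ j - q ^ m) * Bpoly q w j
          = c (m + 1 - j) * Bpoly q w j * ((1 - q ^ (m + 1)) * y) := by
        intro j hj
        have hj' : j ≤ m := Nat.lt_succ_iff.mp (Finset.mem_range.mp hj)
        obtain ⟨k, rfl⟩ : ∃ k, m = j + k := ⟨m - j, (Nat.add_sub_cancel' hj').symm⟩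
        have h1 : j + k - j = k := by omega
        have h2 : j + k + 1 - j = k + 1 := by omega
        rw [h1, h2]
        linear_combination (-(Bpoly q w j * q ^ j)) * crel k
      calc (∑ j ∈ Finset.range (m + 1), c (m - j) * Bpoly q w j) * (z - q ^ m)
          = ∑ j ∈ Finset.range (m + 1), c (m - j) * Bpoly q w j * (z - q ^ m) := by
            rw [Finset.sum_mul]
        _ = ∑ j ∈ Finset.range (m + 1),
              (y * c (m - j) * (1 - q ^ (j + 1)) * Bpoly q w (j + 1)
                + c (m - j) * (y * q ^ j - q ^ m) * Bpoly q w j) :=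
            Finset.sum_congr rfl expand
        _ = (∑ j ∈ Finset.range (m + 1),
              y * c (m - j) * (1 - q ^ (j + 1)) * Bpoly q w (j + 1))
              + ∑ j ∈ Finset.range (m + 1),
                c (m - j) * (y * q ^ j - q ^ m) * Bpoly q w j :=
            Finset.sum_add_distrib
        _ = (∑ j ∈ Finset.range (m + 2),
              y * c (m + 1 - j) * (1 - q ^ j) * Bpoly q w j)
              + ∑ j ∈ Finset.range (m + 1),
                c (m - j) * (y * q ^ j - q ^ m) * Bpoly q w j := by
            congr 1
            rw [Finset.sum_range_succ'
              (fun j => y * c (m + 1 - j) * (1 - q ^ j) * Bpoly q w j) (m + 1)]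
            simp [Nat.succ_sub_succ]
        _ = (∑ j ∈ Finset.range (m + 2), c (m + 1 - j) * Bpoly q w j)
              * ((1 - q ^ (m + 1)) * y) := by
            rw [Finset.sum_mul,
              Finset.sum_range_succ (fun j => y * c (m + 1 - j) * (1 - q ^ j) * Bpoly q w j),
              Finset.sum_range_succ
                (fun j => c (m + 1 - j) * Bpoly q w j * ((1 - q ^ (m + 1)) * y))]
            have e3 : (∑ j ∈ Finset.range (m + 1),
                  y * c (m + 1 - j) * (1 - q ^ j) * Bpoly q w j)
                + (∑ j ∈ Finset.range (m + 1),
                  c (m - j) * (y * q ^ j - q ^ m) * Bpoly q w j)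
                = ∑ j ∈ Finset.range (m + 1),
                  c (m + 1 - j) * Bpoly q w j * ((1 - q ^ (m + 1)) * y) := by
              rw [← Finset.sum_add_distrib]
              exact Finset.sum_congr rfl termwise
            simp only [Nat.sub_self, Nat.add_sub_cancel_left, Nat.add_sub_cancel]
            linear_combination e3
    linear_combination (y ^ m) * key
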